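/- Let U and W be disjoint finite sets, let E ⊆ U × W be a set of edges from U to W (so the DAG is bilayered), and let a : U ∪ W → ℝ with a ≥ 0. Call x : U ∪ W → ℝ feasible if x ≥ 0 and for every w ∈ W, x_w ≥ ∑_{u : (u,w) ∈ E} x_u. Then there exists a feasible x minimizing ∑_{v ∈ U ∪ W} |a_v − x_v| over all feasible assignments which moreover satisfies x_w = a_w for every w ∈ W and x_u ≤ a_u for every u ∈ U. -/

import Mathlib

open Finset
open scoped Classical

private lemma stmt2_round {U W : Type*} [Fintype U] [Fintype W]
    (E : U → W → Prop) (a : U ⊕ W → ℝ) (ha : ∀ v, 0 ≤ a v)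
    (y : U ⊕ W → ℝ) (hy0 : ∀ v, 0 ≤ y v)
    (hyw : ∀ w, (∑ u ∈ univ.filter (fun u => E u w), y (Sum.inl u)) ≤ y (Sum.inr w)) :
    ∃ z : U → ℝ, (∀ u, 0 ≤ z u ∧ z u ≤ a (Sum.inl u)) ∧
      (∀ w, (∑ u ∈ univ.filter (fun u => E u w), z u) ≤ a (Sum.inr w)) ∧
      (∑ u, |a (Sum.inl u) - z u|) ≤ ∑ v, |a v - y v| := by
  classical
  set b : U → ℝ := fun u => min (y (Sum.inl u)) (a (Sum.inl u)) with hbdef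
  have hb0 : ∀ u, 0 ≤ b u := fun u => le_min (hy0 _) (ha _)
  have hba : ∀ u, b u ≤ a (Sum.inl u) := fun u => min_le_right _ _
  have hby : ∀ u, b u ≤ y (Sum.inl u) := fun u => min_le_left _ _
  have key : ∀ T : Finset W, ∃ z : U → ℝ,
      (∀ u, 0 ≤ z u ∧ z u ≤ b u) ∧
      (∀ w ∈ T, (∑ u ∈ univ.filter (fun u => E u w), z u) ≤ a (Sum.inr w)) ∧
      (∑ u, (b u - z u)) ≤
        ∑ w ∈ T, max 0 ((∑ u ∈ univ.filter (fun u => E u w), b u) - a (Sum.inr w)) := by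
    intro T
    induction T using Finset.induction with
    | empty => exact ⟨b, fun u => ⟨hb0 u, le_rfl⟩, by simp, by simp⟩
    | @insert w T hw ih =>
      obtain ⟨z, hz1, hz2, hz3⟩ := ih
      set S := ∑ u ∈ univ.filter (fun u => E u w), z u with hS
      by_cases h : S ≤ a (Sum.inr w)
      · refine ⟨z, hz1, ?_, ?_⟩
        · intro w' hw'
          rcases Finset.mem_insert.mp hw' with rfl | hw'
          · exact h
          · exact hz2 w' hw'
        · rw [Finset.sum_insert hw]
          exact hz3.trans (le_add_of_nonneg_left (le_max_left _ _))
      · push_neg at h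
        have hS0 : 0 < S := lt_of_le_of_lt (ha _) h
        set c := a (Sum.inr w) / S with hc
        have hc0 : 0 ≤ c := div_nonneg (ha _) hS0.le
        have hc1 : c ≤ 1 := (div_le_one hS0).mpr h.le
        set z' : U → ℝ := fun u => if E u w then z u * c else z u with hz'
        have hz'le : ∀ u, z' u ≤ z u := by
          intro u; simp only [hz']
          split
          · exact mul_le_of_le_one_right (hz1 u).1 hc1
          · exact le_rfl
        have hz'0 : ∀ u, 0 ≤ z' u := by
          intro u; simp only [hz']
          split
          · exact mul_nonneg (hz1 u).1 hc0
          · exact (hz1 u).1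
        have hSw : (∑ u ∈ univ.filter (fun u => E u w), z' u) = a (Sum.inr w) := by
          have h1 : (∑ u ∈ univ.filter (fun u => E u w), z' u)
              = ∑ u ∈ univ.filter (fun u => E u w), z u * c := by
            refine Finset.sum_congr rfl fun u hu => ?_
            simp only [hz', if_pos (Finset.mem_filter.mp hu).2]
          rw [h1, ← Finset.sum_mul, ← hS, hc, mul_div_cancel₀ _ hS0.ne']
        refine ⟨z', fun u => ⟨hz'0 u, (hz'le u).trans (hz1 u).2⟩, ?_, ?_⟩
        · intro w' hw'
          rcases Finset.mem_insert.mp hw' with rfl | hw'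
          · exact le_of_eq hSw
          · exact (Finset.sum_le_sum fun u _ => hz'le u).trans (hz2 w' hw')
        · rw [Finset.sum_insert hw]
          have hsplit : (∑ u, (b u - z' u)) = (∑ u, (b u - z u)) + ∑ u, (z u - z' u) := by
            rw [← Finset.sum_add_distrib]
            exact Finset.sum_congr rfl fun u _ => by ring
          have h2 : (∑ u, (z u - z' u)) = S - a (Sum.inr w) := by
            have heq : ∀ u, z u - z' u = if E u w then z u - z u * c else 0 := by
              intro u; simp only [hz']
              split <;> ring
            calc (∑ u, (z u - z' u)) = ∑ u, (if E u w then z u - z u * c else 0) :=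
                  Finset.sum_congr rfl fun u _ => heq u
              _ = ∑ u ∈ univ.filter (fun u => E u w), (z u - z u * c) :=
                  (Finset.sum_filter _ _).symm
              _ = S - S * c := by rw [Finset.sum_sub_distrib, ← Finset.sum_mul, ← hS]
              _ = S - a (Sum.inr w) := by rw [hc, mul_div_cancel₀ _ hS0.ne']
          have h3 : S - a (Sum.inr w)
              ≤ max 0 ((∑ u ∈ univ.filter (fun u => E u w), b u) - a (Sum.inr w)) :=
            le_max_of_le_right (sub_le_sub_right (Finset.sum_le_sum fun u _ => (hz1 u).2) _)
          linarith [hsplit, h2, h3, hz3]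
  obtain ⟨z, hz1, hz2, hz3⟩ := key Finset.univ
  refine ⟨z, fun u => ⟨(hz1 u).1, (hz1 u).2.trans (hba u)⟩, fun w => hz2 w (mem_univ w), ?_⟩
  have habs : ∀ u, |a (Sum.inl u) - z u| = (a (Sum.inl u) - b u) + (b u - z u) := by
    intro u
    rw [abs_of_nonneg (by linarith [(hz1 u).2, hba u])]
    ring
  have h4 : ∀ u, a (Sum.inl u) - b u ≤ |a (Sum.inl u) - y (Sum.inl u)| := by
    intro u
    rcases le_total (y (Sum.inl u)) (a (Sum.inl u)) with h | h
    · have : b u = y (Sum.inl u) := min_eq_left h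
      rw [this]; exact le_abs_self _
    · have : b u = a (Sum.inl u) := min_eq_right h
      rw [this]; simp [abs_nonneg]
  have h5 : ∀ w, max 0 ((∑ u ∈ univ.filter (fun u => E u w), b u) - a (Sum.inr w))
      ≤ |a (Sum.inr w) - y (Sum.inr w)| := by
    intro w
    refine max_le (abs_nonneg _) ?_
    have hle : (∑ u ∈ univ.filter (fun u => E u w), b u) ≤ y (Sum.inr w) :=
      (Finset.sum_le_sum fun u _ => hby u).trans (hyw w)
    calc (∑ u ∈ univ.filter (fun u => E u w), b u) - a (Sum.inr w)
        ≤ y (Sum.inr w) - a (Sum.inr w) := by linarith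
      _ ≤ |a (Sum.inr w) - y (Sum.inr w)| := by rw [abs_sub_comm]; exact le_abs_self _
  calc (∑ u, |a (Sum.inl u) - z u|)
      = (∑ u, (a (Sum.inl u) - b u)) + ∑ u, (b u - z u) := by
        rw [← Finset.sum_add_distrib]; exact Finset.sum_congr rfl fun u _ => habs u
    _ ≤ (∑ u, |a (Sum.inl u) - y (Sum.inl u)|) +
        ∑ w, max 0 ((∑ u ∈ univ.filter (fun u => E u w), b u) - a (Sum.inr w)) :=
        add_le_add (Finset.sum_le_sum fun u _ => h4 u) hz3
    _ ≤ (∑ u, |a (Sum.inl u) - y (Sum.inl u)|) + ∑ w, |a (Sum.inr w) - y (Sum.inr w)| :=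
        add_le_add_right (Finset.sum_le_sum fun w _ => h5 w) _
    _ = ∑ v, |a v - y v| := (Fintype.sum_sum_type fun v => |a v - y v|).symm
/-- For a bilayered DAG with edge relation `E ⊆ U × W` and
non-negative targets `a` on `U ⊕ W`, there is a feasible assignment `x` minimizing
the ℓ1 objective `∑ v, |a v − x v|` over all feasible assignments which moreover
satisfies `x w = a w` for every `w ∈ W` and `x u ≤ a u` for every `u ∈ U`. -/
theorem stmt_2 {U W : Type*} [Fintype U] [Fintype W]
    (E : U → W → Prop)
    (a : U ⊕ W → ℝ) (ha : ∀ v, 0 ≤ a v) :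
    ∃ x : U ⊕ W → ℝ,
      ((∀ v, 0 ≤ x v) ∧
        ∀ w, (∑ u ∈ univ.filter (fun u => E u w), x (Sum.inl u)) ≤ x (Sum.inr w)) ∧
      (∀ y : U ⊕ W → ℝ,
        ((∀ v, 0 ≤ y v) ∧
          ∀ w, (∑ u ∈ univ.filter (fun u => E u w), y (Sum.inl u)) ≤ y (Sum.inr w)) →
        ∑ v, |a v - x v| ≤ ∑ v, |a v - y v|) ∧
      (∀ w, x (Sum.inr w) = a (Sum.inr w)) ∧
      (∀ u, x (Sum.inl u) ≤ a (Sum.inl u)) := by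
  classical
  set f : (U ⊕ W → ℝ) → ℝ := fun x => ∑ v, |a v - x v| with hfdef
  set C : Set (U ⊕ W → ℝ) := {x | (∀ v, x v ∈ Set.Icc 0 (a v)) ∧
    (∀ w, x (Sum.inr w) = a (Sum.inr w)) ∧
    ∀ w, (∑ u ∈ univ.filter (fun u => E u w), x (Sum.inl u)) ≤ a (Sum.inr w)} with hCdef
  have hfcont : Continuous f :=
    continuous_finset_sum _ fun v _ => (continuous_const.sub (continuous_apply v)).abs
  have hclosed : IsClosed C := by
    have : C = (⋂ v, {x : U ⊕ W → ℝ | x v ∈ Set.Icc 0 (a v)}) ∩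
        ((⋂ w, {x : U ⊕ W → ℝ | x (Sum.inr w) = a (Sum.inr w)}) ∩
         (⋂ w, {x : U ⊕ W → ℝ |
            (∑ u ∈ univ.filter (fun u => E u w), x (Sum.inl u)) ≤ a (Sum.inr w)})) := by
      ext x
      simp only [hCdef, Set.mem_inter_iff, Set.mem_iInter, Set.mem_setOf_eq]
    rw [this]
    refine (isClosed_iInter fun v => ?_).inter
      ((isClosed_iInter fun w => ?_).inter (isClosed_iInter fun w => ?_))
    · exact isClosed_Icc.preimage (continuous_apply v)
    · exact isClosed_eq (continuous_apply _) continuous_const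
    · exact isClosed_le (continuous_finset_sum _ fun u _ => continuous_apply _) continuous_const
  have hsub : C ⊆ Set.pi Set.univ fun v => Set.Icc 0 (a v) := by
    intro x hx
    exact fun v _ => hx.1 v
  have hcompact : IsCompact C :=
    (isCompact_univ_pi fun v => isCompact_Icc).of_isClosed_subset hclosed hsub
  have hne : C.Nonempty := by
    refine ⟨Sum.elim (fun _ => 0) (fun w => a (Sum.inr w)), ?_, ?_, ?_⟩
    · intro v
      rcases v with u | w
      · exact ⟨le_rfl, ha _⟩
      · exact ⟨ha _, le_rfl⟩
    · intro w; rfl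
    · intro w; simp [ha]
  obtain ⟨x, hxC, hxmin⟩ := hcompact.exists_isMinOn hne hfcont.continuousOn
  refine ⟨x, ⟨fun v => (hxC.1 v).1, fun w => ?_⟩, ?_, fun w => hxC.2.1 w,
    fun u => (hxC.1 (Sum.inl u)).2⟩
  · rw [hxC.2.1 w]; exact hxC.2.2 w
  · rintro y ⟨hy0, hyw⟩
    obtain ⟨z, hz1, hz2, hz3⟩ := stmt2_round E a ha y hy0 hyw
    set x' : U ⊕ W → ℝ := Sum.elim z (fun w => a (Sum.inr w)) with hx'
    have hx'C : x' ∈ C := by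
      refine ⟨?_, fun w => rfl, fun w => ?_⟩
      · intro v
        rcases v with u | w
        · exact ⟨(hz1 u).1, (hz1 u).2⟩
        · exact ⟨ha _, le_rfl⟩
      · exact hz2 w
    have hfx' : f x' = ∑ u, |a (Sum.inl u) - z u| := by
      show (∑ v, |a v - x' v|) = _
      rw [Fintype.sum_sum_type fun v => |a v - x' v|]
      simp [hx']
    calc f x ≤ f x' := hxmin hx'C
      _ ≤ ∑ v, |a v - y v| := by rw [hfx']; exact hz3
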